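/- For every n ≥ 1, the map φ : RP^n → AVR^m(S^n; π) defined by φ([x]) = (1/2)δ_x + (1/2)δ_{−x} is a topological embedding of real projective space RP^n into the anti-Vietoris–Rips metric thickening AVR^m(S^n; π). -/

import Mathlib

open MeasureTheory
open scoped ENNReal

noncomputable section

/-- Euclidean space `ℝ^{n+1}`. -/
abbrev E (n : ℕ) := EuclideanSpace ℝ (Fin (n + 1))

/-- The unit `n`-sphere in `ℝ^{n+1}`. -/
abbrev Sph (n : ℕ) := ↥(Metric.sphere (0 : E n) 1)

/-- The geodesic distance on the unit sphere: the angle between the two unit vectors. -/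
def gdist {n : ℕ} (x y : Sph n) : ℝ := InnerProductGeometry.angle (x : E n) (y : E n)

/-- The antipodal map on the sphere. -/
def antipode {n : ℕ} (x : Sph n) : Sph n :=
  ⟨-(x : E n), by
    rw [mem_sphere_zero_iff_norm, norm_neg]
    exact mem_sphere_zero_iff_norm.mp x.2⟩

/-- Real projective space `RP^n = S^n/(x ∼ -x)`, with the quotient topology. -/
def RP (n : ℕ) := Quot (fun x y : Sph n => y = antipode x)

instance (n : ℕ) : TopologicalSpace (RP n) := by unfold RP; infer_instance

/-- The set of transport plans (couplings) between two measures. -/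
def couplings {X : Type*} [MeasurableSpace X] (μ ν : Measure X) : Set (Measure (X × X)) :=
  {π | π.map Prod.fst = μ ∧ π.map Prod.snd = ν}

/-- The 1-Wasserstein distance on measures on the sphere, with respect to the geodesic metric. -/
def W1 {n : ℕ} (μ ν : Measure (Sph n)) : ℝ≥0∞ :=
  ⨅ π ∈ couplings μ ν, ∫⁻ p, ENNReal.ofReal (gdist p.1 p.2) ∂π

/-- The topology induced by the 1-Wasserstein metric (generated by W1-balls). -/
instance (n : ℕ) : TopologicalSpace (Measure (Sph n)) :=
  TopologicalSpace.generateFrom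
    {B | ∃ (μ : Measure (Sph n)) (ε : ℝ), 0 < ε ∧ B = {ν | W1 μ ν < ENNReal.ofReal ε}}

/-- The anti-Vietoris–Rips metric thickening of the sphere `S^n` at scale `r`: all finitely
supported probability measures whose support has spread at least `r` in the geodesic metric. -/
def avrmSet (n : ℕ) (r : ℝ) : Set (Measure (Sph n)) :=
  {μ | ∃ (s : Finset (Sph n)) (w : Sph n → ℝ),
    (∀ x ∈ s, 0 < w x) ∧ (∑ x ∈ s, w x) = 1 ∧
    (∀ x ∈ s, ∀ y ∈ s, x ≠ y → r ≤ gdist x y) ∧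
    μ = ∑ x ∈ s, ENNReal.ofReal (w x) • Measure.dirac x}

/-- The anti-Vietoris–Rips metric thickening as a topological space (1-Wasserstein topology). -/
abbrev AVRm (n : ℕ) (r : ℝ) := ↥(avrmSet n r)

lemma antipode_antipode {n : ℕ} (x : Sph n) : antipode (antipode x) = x :=
  Subtype.ext (neg_neg _)

/-- The measure `(1/2)δ_x + (1/2)δ_{-x}` on the sphere. -/
def phi0 (n : ℕ) (x : Sph n) : Measure (Sph n) :=
  (2⁻¹ : ℝ≥0∞) • Measure.dirac x + (2⁻¹ : ℝ≥0∞) • Measure.dirac (antipode x)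

/-- The map `RP^n → AVR^m(S^n; π)`, `[x] ↦ (1/2)δ_x + (1/2)δ_{-x}` (valued in measures). -/
def phi (n : ℕ) : RP n → Measure (Sph n) :=
  Quot.lift (phi0 n) (by
    intro x y h
    subst h
    unfold phi0
    rw [antipode_antipode]; exact add_comm _ _)

variable {n : ℕ}

variable {n : ℕ}

lemma Sph.norm_eq (x : Sph n) : ‖(x : E n)‖ = 1 := mem_sphere_zero_iff_norm.mp x.2

lemma Sph.ne_zero (x : Sph n) : (x : E n) ≠ 0 := by
  intro h; have := Sph.norm_eq x; rw [h, norm_zero] at this; norm_num at this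

lemma gdist_comm (x y : Sph n) : gdist x y = gdist y x := InnerProductGeometry.angle_comm _ _

lemma gdist_nonneg (x y : Sph n) : 0 ≤ gdist x y := InnerProductGeometry.angle_nonneg _ _

lemma gdist_le_pi (x y : Sph n) : gdist x y ≤ Real.pi := InnerProductGeometry.angle_le_pi _ _

lemma gdist_self (x : Sph n) : gdist x x = 0 := InnerProductGeometry.angle_self (Sph.ne_zero x)

lemma gdist_antipode_right (x y : Sph n) : gdist x (antipode y) = Real.pi - gdist x y :=
  InnerProductGeometry.angle_neg_right _ _

lemma gdist_antipode_left (x y : Sph n) : gdist (antipode x) y = Real.pi - gdist x y :=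
  InnerProductGeometry.angle_neg_left _ _

lemma gdist_antipode_antipode (x y : Sph n) : gdist (antipode x) (antipode y) = gdist x y :=
  InnerProductGeometry.angle_neg_neg _ _

lemma gdist_antipode_self (x : Sph n) : gdist x (antipode x) = Real.pi :=
  InnerProductGeometry.angle_self_neg_of_nonzero (Sph.ne_zero x)

lemma antipode_ne (x : Sph n) : x ≠ antipode x := by
  intro h
  have h2 : (x : E n) = -(x : E n) := congrArg Subtype.val h
  have h3 : (inner ℝ (x : E n) (x : E n) : ℝ) = - inner ℝ (x : E n) (x : E n) := by
    nth_rewrite 1 [h2]; rw [inner_neg_left]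
  have h4 : (inner ℝ (x : E n) (x : E n) : ℝ) = 1 := by
    rw [real_inner_self_eq_norm_sq, Sph.norm_eq]; norm_num
  rw [h4] at h3; norm_num at h3

lemma cos_gdist (x y : Sph n) : Real.cos (gdist x y) = inner ℝ (x : E n) (y : E n) := by
  rw [gdist, InnerProductGeometry.cos_angle, Sph.norm_eq, Sph.norm_eq]
  simp

lemma gdist_eq_arccos (x y : Sph n) : gdist x y = Real.arccos (inner ℝ (x : E n) (y : E n)) := by
  rw [gdist, InnerProductGeometry.angle, Sph.norm_eq, Sph.norm_eq]
  norm_num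

lemma gdist_eq_zero {x y : Sph n} (h : gdist x y = 0) : x = y := by
  obtain ⟨-, r, hr, hxy⟩ := InnerProductGeometry.angle_eq_zero_iff.mp h
  have hn : ‖(y : E n)‖ = r * ‖(x : E n)‖ := by rw [hxy, norm_smul, Real.norm_eq_abs, abs_of_pos hr]
  rw [Sph.norm_eq, Sph.norm_eq] at hn
  have hr1 : r = 1 := by linarith [hn]
  have hv : (y : E n) = (x : E n) := by rw [hxy, hr1, one_smul]
  exact Subtype.ext hv.symm

lemma gdist_eq_pi {x y : Sph n} (h : gdist x y = Real.pi) : y = antipode x := by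
  obtain ⟨-, r, hr, hxy⟩ := InnerProductGeometry.angle_eq_pi_iff.mp h
  have hn : ‖(y : E n)‖ = -r * ‖(x : E n)‖ := by
    rw [hxy, norm_smul, Real.norm_eq_abs, abs_of_neg hr]
  rw [Sph.norm_eq, Sph.norm_eq] at hn
  have : r = -1 := by linarith [hn]
  refine Subtype.ext (show (y : E n) = -(x : E n) from ?_)
  rw [hxy, this]; simp

lemma arccos_le_arccos {a b : ℝ} (h : a ≤ b) : Real.arccos b ≤ Real.arccos a := by
  simp only [Real.arccos]
  linarith [Real.monotone_arcsin h]

lemma gdist_triangle (x y z : Sph n) : gdist x z ≤ gdist x y + gdist y z := by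
  set a := gdist x y with ha
  set b := gdist y z with hb
  by_cases hab : Real.pi ≤ a + b
  · exact le_trans (gdist_le_pi x z) hab
  push_neg at hab
  have ha0 : 0 ≤ a := gdist_nonneg x y
  have hb0 : 0 ≤ b := gdist_nonneg y z
  have key : Real.cos (a + b) ≤ inner ℝ (x : E n) (z : E n) := by
    set u : E n := (x : E n) - (inner ℝ (x : E n) (y : E n) : ℝ) • (y : E n) with hu
    set v : E n := (z : E n) - (inner ℝ (z : E n) (y : E n) : ℝ) • (y : E n) with hv
    have hyy : (inner ℝ (y : E n) (y : E n) : ℝ) = 1 := by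
      rw [real_inner_self_eq_norm_sq, Sph.norm_eq]; norm_num
    have huv : (inner ℝ u v : ℝ) =
        inner ℝ (x : E n) (z : E n) - inner ℝ (x : E n) (y : E n) * inner ℝ (y : E n) (z : E n) := by
      simp only [hu, hv, inner_sub_left, inner_sub_right, real_inner_smul_left,
        real_inner_smul_right, hyy]
      rw [real_inner_comm (z : E n) (y : E n), real_inner_comm (z : E n) (x : E n)]
      ring
    have hun : ‖u‖ ^ 2 = 1 - (inner ℝ (x : E n) (y : E n) : ℝ) ^ 2 := by
      rw [← real_inner_self_eq_norm_sq]
      simp only [hu, inner_sub_left, inner_sub_right, real_inner_smul_left,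
        real_inner_smul_right, hyy]
      rw [real_inner_self_eq_norm_sq, Sph.norm_eq, real_inner_comm (y : E n) (x : E n)]
      ring
    have hvn : ‖v‖ ^ 2 = 1 - (inner ℝ (z : E n) (y : E n) : ℝ) ^ 2 := by
      rw [← real_inner_self_eq_norm_sq]
      simp only [hv, inner_sub_left, inner_sub_right, real_inner_smul_left,
        real_inner_smul_right, hyy]
      rw [real_inner_self_eq_norm_sq, Sph.norm_eq, real_inner_comm (y : E n) (z : E n)]
      ring
    have hsa : Real.sin a = ‖u‖ := by
      rw [Real.sin_eq_sqrt_one_sub_cos_sq ha0 (gdist_le_pi x y), ha, cos_gdist, ← hun,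
        Real.sqrt_sq (norm_nonneg u)]
    have hsb : Real.sin b = ‖v‖ := by
      rw [Real.sin_eq_sqrt_one_sub_cos_sq hb0 (gdist_le_pi y z), hb, gdist_comm, cos_gdist, ← hvn,
        Real.sqrt_sq (norm_nonneg v)]
    have hcs : -(‖u‖ * ‖v‖) ≤ (inner ℝ u v : ℝ) :=
      neg_le_of_neg_le (by linarith [abs_real_inner_le_norm u v, neg_abs_le (inner ℝ u v : ℝ)])
    have hc : (inner ℝ (y : E n) (z : E n) : ℝ) = inner ℝ (z : E n) (y : E n) := real_inner_comm _ _
    rw [hc] at huv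
    rw [Real.cos_add, hsa, hsb, ha, hb, cos_gdist, gdist_comm, cos_gdist]
    linarith [huv, hcs]
  calc gdist x z = Real.arccos (inner ℝ (x : E n) (z : E n)) := gdist_eq_arccos x z
    _ ≤ Real.arccos (Real.cos (a + b)) := arccos_le_arccos key
    _ = a + b := Real.arccos_cos (by linarith) (le_of_lt hab)

lemma chordal_le_gdist (x y : Sph n) : ‖(x : E n) - (y : E n)‖ ≤ gdist x y := by
  have h1 : ‖(x : E n) - (y : E n)‖ ^ 2 = 2 - 2 * inner ℝ (x : E n) (y : E n) := by
    rw [@norm_sub_sq_real, Sph.norm_eq, Sph.norm_eq]; ring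
  have h2 : (2 : ℝ) - 2 * Real.cos (gdist x y) ≤ (gdist x y) ^ 2 := by
    have := Real.one_sub_sq_div_two_le_cos (x := gdist x y)
    linarith
  have h3 : ‖(x : E n) - (y : E n)‖ ^ 2 ≤ (gdist x y) ^ 2 := by
    rw [h1, ← cos_gdist]; linarith
  exact (pow_le_pow_iff_left₀ (norm_nonneg _) (gdist_nonneg x y) two_ne_zero).mp h3

lemma antipode_antipode' (x : Sph n) : antipode (antipode x) = x := Subtype.ext (neg_neg _)

lemma phi0_antipode (x : Sph n) : phi0 n (antipode x) = phi0 n x := by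
  rw [phi0, phi0, antipode_antipode']; exact add_comm _ _

lemma continuous_gdist : Continuous (fun p : Sph n × Sph n => gdist p.1 p.2) := by
  rw [continuous_iff_continuousAt]
  intro p
  have h := InnerProductGeometry.continuousAt_angle
    (x := (((p.1 : Sph n) : E n), ((p.2 : Sph n) : E n))) (Sph.ne_zero p.1) (Sph.ne_zero p.2)
  have hc : Continuous (fun p : Sph n × Sph n => (((p.1 : E n)), ((p.2 : E n)))) := by fun_prop
  simpa [Function.comp_def, gdist] using ContinuousAt.comp (x := p) h hc.continuousAt

lemma measurable_cost :
    Measurable (fun p : Sph n × Sph n => ENNReal.ofReal (gdist p.1 p.2)) :=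
  (ENNReal.continuous_ofReal.comp continuous_gdist).measurable

lemma phi0_univ (x : Sph n) : phi0 n x Set.univ = 1 := by
  simp [phi0]
  exact ENNReal.inv_two_add_inv_two

lemma phi0_compl (x : Sph n) : phi0 n x ({x, antipode x} : Set (Sph n))ᶜ = 0 := by
  have hm : MeasurableSet (({x, antipode x} : Set (Sph n))ᶜ) :=
    (((Set.finite_singleton _).insert _).measurableSet).compl
  simp [phi0, Measure.dirac_apply' _ hm]

lemma coupling_univ {μ : Measure (Sph n)} {x : Sph n} {π : Measure (Sph n × Sph n)}
    (hπ : π ∈ couplings μ (phi0 n x)) : π Set.univ = 1 := by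
  have := congrArg (fun m : Measure (Sph n) => m Set.univ) hπ.2
  simpa [Measure.map_apply measurable_snd MeasurableSet.univ, phi0_univ] using this

lemma coupling_ae_snd {μ : Measure (Sph n)} {x : Sph n} {π : Measure (Sph n × Sph n)}
    (hπ : π ∈ couplings μ (phi0 n x)) :
    π (Prod.snd ⁻¹' ({x, antipode x} : Set (Sph n))ᶜ) = 0 := by
  have hm : MeasurableSet (({x, antipode x} : Set (Sph n))ᶜ) :=
    (((Set.finite_singleton _).insert _).measurableSet).compl
  rw [← Measure.map_apply measurable_snd hm, hπ.2, phi0_compl]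

lemma coupling_ae_fst {μ : Measure (Sph n)} {x : Sph n} {π : Measure (Sph n × Sph n)}
    (hπ : π ∈ couplings (phi0 n x) μ) :
    π (Prod.fst ⁻¹' ({x, antipode x} : Set (Sph n))ᶜ) = 0 := by
  have hm : MeasurableSet (({x, antipode x} : Set (Sph n))ᶜ) :=
    (((Set.finite_singleton _).insert _).measurableSet).compl
  rw [← Measure.map_apply measurable_fst hm, hπ.1, phi0_compl]

lemma W1_phi0_le (x y : Sph n) : W1 (phi0 n x) (phi0 n y) ≤ ENNReal.ofReal (gdist x y) := by
  set κ : Measure (Sph n × Sph n) :=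
    (2⁻¹ : ℝ≥0∞) • Measure.dirac (x, y) + (2⁻¹ : ℝ≥0∞) • Measure.dirac (antipode x, antipode y)
    with hκ
  have hmem : κ ∈ couplings (phi0 n x) (phi0 n y) := by
    constructor
    · rw [hκ, Measure.map_add _ _ measurable_fst, Measure.map_smul, Measure.map_smul,
        Measure.map_dirac' measurable_fst, Measure.map_dirac' measurable_fst]
      rfl
    · rw [hκ, Measure.map_add _ _ measurable_snd, Measure.map_smul, Measure.map_smul,
        Measure.map_dirac' measurable_snd, Measure.map_dirac' measurable_snd]
      rfl
  have hcost : ∫⁻ p, ENNReal.ofReal (gdist p.1 p.2) ∂κ = ENNReal.ofReal (gdist x y) := by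
    rw [hκ, lintegral_add_measure, lintegral_smul_measure, lintegral_smul_measure,
      lintegral_dirac, lintegral_dirac]
    simp only [gdist_antipode_antipode]
    rw [smul_eq_mul, ← add_mul, ← two_mul, ENNReal.mul_inv_cancel two_ne_zero ENNReal.ofNat_ne_top, one_mul]
  calc W1 (phi0 n x) (phi0 n y) ≤ ∫⁻ p, ENNReal.ofReal (gdist p.1 p.2) ∂κ := iInf₂_le κ hmem
    _ = _ := hcost

lemma W1_phi0_ge (x y : Sph n) :
    ENNReal.ofReal (min (gdist x y) (Real.pi - gdist x y)) ≤ W1 (phi0 n x) (phi0 n y) := by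
  refine le_iInf₂ fun π hπ => ?_
  set S : Set (Sph n) := {x, antipode x} with hS
  set T : Set (Sph n) := {y, antipode y} with hT
  have hSm : MeasurableSet S := ((Set.finite_singleton _).insert _).measurableSet
  have hTm : MeasurableSet T := ((Set.finite_singleton _).insert _).measurableSet
  have h1 : π (Prod.fst ⁻¹' Sᶜ) = 0 := coupling_ae_fst hπ
  have h2 : π (Prod.snd ⁻¹' Tᶜ) = 0 := coupling_ae_snd ⟨hπ.1, hπ.2⟩
  have hcompl : π ((S ×ˢ T)ᶜ) = 0 := by
    refine measure_mono_null (fun p hp => ?_) (measure_union_null h1 h2)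
    simp only [Set.mem_compl_iff, Set.mem_prod, not_and_or] at hp
    rcases hp with hp | hp
    · exact Or.inl hp
    · exact Or.inr hp
  have huniv : π Set.univ = 1 := by
    have := congrArg (fun m : Measure (Sph n) => m Set.univ) hπ.1
    simpa [Measure.map_apply measurable_fst MeasurableSet.univ, phi0_univ] using this
  have hST : (1 : ℝ≥0∞) ≤ π (S ×ˢ T) := by
    have h3 := measure_union_le (μ := π) (S ×ˢ T) ((S ×ˢ T)ᶜ)
    have h4 : π Set.univ ≤ π (S ×ˢ T) + π ((S ×ˢ T)ᶜ) :=
      le_trans (measure_mono (by simp)) h3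
    rw [huniv, hcompl, add_zero] at h4
    exact h4
  set m := min (gdist x y) (Real.pi - gdist x y) with hm
  have hpt : ∀ p ∈ S ×ˢ T, ENNReal.ofReal m ≤ ENNReal.ofReal (gdist p.1 p.2) := by
    rintro ⟨p, q⟩ ⟨hp, hq⟩
    refine ENNReal.ofReal_le_ofReal ?_
    rcases hp with hp | hp <;> rcases hq with hq | hq <;>
      simp only [Set.mem_singleton_iff] at * <;> subst hp <;> subst hq
    · exact min_le_left _ _
    · rw [gdist_antipode_right]; exact min_le_right _ _
    · rw [gdist_antipode_left]; exact min_le_right _ _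
    · rw [gdist_antipode_antipode]; exact min_le_left _ _
  calc ENNReal.ofReal m = ENNReal.ofReal m * 1 := (mul_one _).symm
    _ ≤ ENNReal.ofReal m * π (S ×ˢ T) := by gcongr
    _ = ∫⁻ _ in S ×ˢ T, ENNReal.ofReal m ∂π := (setLIntegral_const _ _).symm
    _ ≤ ∫⁻ p in S ×ˢ T, ENNReal.ofReal (gdist p.1 p.2) ∂π :=
        setLIntegral_mono' (hSm.prod hTm) hpt
    _ ≤ ∫⁻ p, ENNReal.ofReal (gdist p.1 p.2) ∂π := setLIntegral_le_lintegral _ _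

lemma W1_phi0_eq (x y : Sph n) :
    W1 (phi0 n x) (phi0 n y) = ENNReal.ofReal (min (gdist x y) (Real.pi - gdist x y)) := by
  refine le_antisymm ?_ (W1_phi0_ge x y)
  rcases min_cases (gdist x y) (Real.pi - gdist x y) with ⟨h, -⟩ | ⟨h, -⟩
  · rw [h]; exact W1_phi0_le x y
  · rw [h, ← gdist_antipode_right, ← phi0_antipode y]
    exact W1_phi0_le x (antipode y)

lemma W1_triangle_aux (μ : Measure (Sph n)) (x y : Sph n) :
    W1 μ (phi0 n y) ≤ W1 μ (phi0 n x) + ENNReal.ofReal (gdist x y) := by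
  classical
  set c : ℝ≥0∞ := ENNReal.ofReal (gdist x y) with hc
  have step : ∀ π1 ∈ couplings μ (phi0 n x),
      W1 μ (phi0 n y) ≤ (∫⁻ p, ENNReal.ofReal (gdist p.1 p.2) ∂π1) + c := by
    intro π1 hπ1
    set T : Sph n → Sph n :=
      fun z => if z = x then y else if z = antipode x then antipode y else y with hTdef
    have hTmeas : Measurable T := by
      have h1 : MeasurableSet {z : Sph n | z = x} := by
        simp only [Set.setOf_eq_eq_singleton]; exact measurableSet_singleton x
      have h2 : MeasurableSet {z : Sph n | z = antipode x} := by
        simp only [Set.setOf_eq_eq_singleton]; exact measurableSet_singleton (antipode x)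
      exact Measurable.ite h1 measurable_const
        (Measurable.ite h2 measurable_const measurable_const)
    have hTx : T x = y := if_pos rfl
    have hTax : T (antipode x) = antipode y := by
      rw [hTdef]; simp [Ne.symm (antipode_ne x)]
    have hmapT : (phi0 n x).map T = phi0 n y := by
      rw [phi0, Measure.map_add _ _ hTmeas, Measure.map_smul, Measure.map_smul,
        Measure.map_dirac' hTmeas, Measure.map_dirac' hTmeas, hTx, hTax, phi0]
    set g : Sph n × Sph n → Sph n × Sph n := fun p => (p.1, T p.2) with hg
    have hgmeas : Measurable g := measurable_fst.prodMk (hTmeas.comp measurable_snd)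
    have hmem : π1.map g ∈ couplings μ (phi0 n y) := by
      constructor
      · rw [Measure.map_map measurable_fst hgmeas]
        exact hπ1.1
      · rw [Measure.map_map measurable_snd hgmeas]
        have : (Prod.snd ∘ g) = T ∘ Prod.snd := rfl
        rw [this, ← Measure.map_map hTmeas measurable_snd, hπ1.2, hmapT]
    have hae : ∀ᵐ p ∂π1, (p : Sph n × Sph n).2 ∈ ({x, antipode x} : Set (Sph n)) := by
      rw [MeasureTheory.ae_iff]
      have : {p : Sph n × Sph n | ¬ p.2 ∈ ({x, antipode x} : Set (Sph n))} =
          Prod.snd ⁻¹' ({x, antipode x} : Set (Sph n))ᶜ := rfl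
      rw [this]
      exact coupling_ae_snd hπ1
    have hbound : ∀ᵐ p ∂π1, ENNReal.ofReal (gdist (p : Sph n × Sph n).1 (T p.2)) ≤
        ENNReal.ofReal (gdist p.1 p.2) + c := by
      filter_upwards [hae] with p hp
      have hd : gdist p.2 (T p.2) = gdist x y := by
        rcases hp with hp | hp
        · rw [hp, hTx]
        · rw [Set.mem_singleton_iff] at hp
          rw [hp, hTax, gdist_antipode_antipode]
      have htri : gdist p.1 (T p.2) ≤ gdist p.1 p.2 + gdist x y := by
        calc gdist p.1 (T p.2) ≤ gdist p.1 p.2 + gdist p.2 (T p.2) := gdist_triangle _ _ _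
          _ = gdist p.1 p.2 + gdist x y := by rw [hd]
      calc ENNReal.ofReal (gdist p.1 (T p.2)) ≤ ENNReal.ofReal (gdist p.1 p.2 + gdist x y) :=
            ENNReal.ofReal_le_ofReal htri
        _ = ENNReal.ofReal (gdist p.1 p.2) + c := by
            rw [hc, ENNReal.ofReal_add (gdist_nonneg _ _) (gdist_nonneg _ _)]
    have huniv : π1 Set.univ = 1 := coupling_univ hπ1
    calc W1 μ (phi0 n y) ≤ ∫⁻ p, ENNReal.ofReal (gdist p.1 p.2) ∂(π1.map g) :=
          iInf₂_le _ hmem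
      _ = ∫⁻ p, ENNReal.ofReal (gdist p.1 (T p.2)) ∂π1 := by
          rw [MeasureTheory.lintegral_map measurable_cost hgmeas]
      _ ≤ ∫⁻ p, (ENNReal.ofReal (gdist p.1 p.2) + c) ∂π1 := lintegral_mono_ae hbound
      _ = (∫⁻ p, ENNReal.ofReal (gdist p.1 p.2) ∂π1) + c * π1 Set.univ := by
          rw [lintegral_add_right _ measurable_const, lintegral_const]
      _ = (∫⁻ p, ENNReal.ofReal (gdist p.1 p.2) ∂π1) + c := by rw [huniv, mul_one]
  calc W1 μ (phi0 n y)
      ≤ ⨅ π1 ∈ couplings μ (phi0 n x), ((∫⁻ p, ENNReal.ofReal (gdist p.1 p.2) ∂π1) + c) :=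
        le_iInf₂ step
    _ = W1 μ (phi0 n x) + c := by
        rw [W1]; simp only [ENNReal.iInf_add]

lemma W1_triangle_min (μ : Measure (Sph n)) (x y : Sph n) :
    W1 μ (phi0 n y) ≤ W1 μ (phi0 n x) +
      ENNReal.ofReal (min (gdist x y) (Real.pi - gdist x y)) := by
  rcases min_cases (gdist x y) (Real.pi - gdist x y) with ⟨h, -⟩ | ⟨h, -⟩
  · rw [h]; exact W1_triangle_aux μ x y
  · rw [h, ← gdist_antipode_right, ← phi0_antipode y]
    exact W1_triangle_aux μ x (antipode y)

lemma isOpen_ball (μ : Measure (Sph n)) {ε : ℝ} (hε : 0 < ε) :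
    IsOpen {ν : Measure (Sph n) | W1 μ ν < ENNReal.ofReal ε} := by
  have h : @IsOpen _ (TopologicalSpace.generateFrom
      {B | ∃ (μ : Measure (Sph n)) (ε : ℝ), 0 < ε ∧ B = {ν | W1 μ ν < ENNReal.ofReal ε}})
      {ν : Measure (Sph n) | W1 μ ν < ENNReal.ofReal ε} :=
    TopologicalSpace.isOpen_generateFrom_of_mem ⟨μ, ε, hε, rfl⟩
  exact h

lemma continuous_rho (x : Sph n) :
    Continuous (fun z : Sph n => min (gdist x z) (Real.pi - gdist x z)) := by
  have h2 : Continuous (fun z : Sph n => ((x, z) : Sph n × Sph n)) := by fun_prop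
  have h : Continuous (fun z : Sph n => gdist x z) := by
    simpa [Function.comp_def] using continuous_gdist.comp h2
  exact h.min (continuous_const.sub h)

lemma rho_self (x : Sph n) : min (gdist x x) (Real.pi - gdist x x) = 0 := by
  rw [gdist_self, sub_zero]
  exact min_eq_left Real.pi_pos.le

lemma continuous_phi0 : Continuous (phi0 n) := by
  rw [continuous_generateFrom_iff]
  rintro B ⟨μ, ε, hε, rfl⟩
  rw [isOpen_iff_mem_nhds]
  intro z0 hz0
  simp only [Set.mem_preimage, Set.mem_setOf_eq] at hz0
  have htop : W1 μ (phi0 n z0) ≠ ⊤ := (lt_of_lt_of_le hz0 le_top).ne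
  set t' : ℝ := (W1 μ (phi0 n z0)).toReal with ht'
  have ht : W1 μ (phi0 n z0) = ENNReal.ofReal t' := (ENNReal.ofReal_toReal htop).symm
  have ht'nonneg : 0 ≤ t' := ENNReal.toReal_nonneg
  have ht'lt : t' < ε := by
    rw [ht] at hz0
    exact (ENNReal.ofReal_lt_ofReal_iff hε).mp hz0
  set δ : ℝ := (ε - t') / 2 with hδ
  have hδpos : 0 < δ := half_pos (by linarith)
  have hsub : (fun z : Sph n => min (gdist z0 z) (Real.pi - gdist z0 z)) ⁻¹' Set.Iio δ ⊆
      phi0 n ⁻¹' {ν | W1 μ ν < ENNReal.ofReal ε} := by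
    intro z hz
    simp only [Set.mem_preimage, Set.mem_Iio] at hz
    simp only [Set.mem_preimage, Set.mem_setOf_eq]
    calc W1 μ (phi0 n z)
        ≤ W1 μ (phi0 n z0) + ENNReal.ofReal (min (gdist z0 z) (Real.pi - gdist z0 z)) :=
          W1_triangle_min μ z0 z
      _ ≤ ENNReal.ofReal t' + ENNReal.ofReal δ := by
          rw [ht]
          exact add_le_add_right (ENNReal.ofReal_le_ofReal hz.le) _
      _ = ENNReal.ofReal (t' + δ) := (ENNReal.ofReal_add ht'nonneg hδpos.le).symm
      _ < ENNReal.ofReal ε := (ENNReal.ofReal_lt_ofReal_iff hε).mpr (by rw [hδ]; linarith)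
  refine Filter.mem_of_superset ?_ hsub
  refine IsOpen.mem_nhds ((continuous_rho z0).isOpen_preimage _ isOpen_Iio) ?_
  simp only [Set.mem_preimage, Set.mem_Iio, rho_self]
  exact hδpos

lemma exists_eps {U : Set (RP n)} (hU : IsOpen U) {x : Sph n}
    (hx : Quot.mk (fun x y : Sph n => y = antipode x) x ∈ U) :
    ∃ ε : ℝ, 0 < ε ∧ ∀ z : Sph n,
      min (gdist x z) (Real.pi - gdist x z) < ε →
        Quot.mk (fun x y : Sph n => y = antipode x) z ∈ U := by
  have hU' : IsOpen (Quot.mk (fun x y : Sph n => y = antipode x) ⁻¹' U) :=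
    hU.preimage continuous_quot_mk
  have hx1 : x ∈ Quot.mk (fun x y : Sph n => y = antipode x) ⁻¹' U := hx
  have hmk : (Quot.mk (fun x y : Sph n => y = antipode x) x : RP n) =
      Quot.mk _ (antipode x) := Quot.sound rfl
  have hx2 : antipode x ∈ Quot.mk (fun x y : Sph n => y = antipode x) ⁻¹' U := by
    show Quot.mk _ (antipode x) ∈ U
    rw [← hmk]; exact hx
  obtain ⟨δ1, hδ1, hball1⟩ := Metric.isOpen_iff.mp hU' x hx1
  obtain ⟨δ2, hδ2, hball2⟩ := Metric.isOpen_iff.mp hU' (antipode x) hx2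
  refine ⟨min δ1 δ2, lt_min hδ1 hδ2, fun z hz => ?_⟩
  have hzδ1 : min (gdist x z) (Real.pi - gdist x z) < δ1 := lt_of_lt_of_le hz (min_le_left _ _)
  have hzδ2 : min (gdist x z) (Real.pi - gdist x z) < δ2 := lt_of_lt_of_le hz (min_le_right _ _)
  rcases min_cases (gdist x z) (Real.pi - gdist x z) with ⟨he, -⟩ | ⟨he, -⟩
  · rw [he] at hzδ1
    have hd : dist z x < δ1 := by
      rw [Subtype.dist_eq, dist_eq_norm]
      calc ‖(z : E n) - (x : E n)‖ ≤ gdist z x := chordal_le_gdist z x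
        _ = gdist x z := gdist_comm z x
        _ < δ1 := hzδ1
    exact hball1 hd
  · rw [he] at hzδ2
    have hd : dist z (antipode x) < δ2 := by
      rw [Subtype.dist_eq, dist_eq_norm]
      calc ‖(z : E n) - ((antipode x : Sph n) : E n)‖ ≤ gdist z (antipode x) :=
            chordal_le_gdist z (antipode x)
        _ = gdist (antipode x) z := gdist_comm z (antipode x)
        _ = Real.pi - gdist x z := gdist_antipode_left x z
        _ < δ2 := hzδ2
    exact hball2 hd

lemma phi0_mem (x : Sph n) : phi0 n x ∈ avrmSet n Real.pi := by
  classical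
  refine ⟨{x, antipode x}, fun _ => (1/2 : ℝ), fun z _ => by norm_num, ?_, ?_, ?_⟩
  · rw [Finset.sum_pair (antipode_ne x)]; norm_num
  · intro a ha b hb hab
    simp only [Finset.mem_insert, Finset.mem_singleton] at ha hb
    rcases ha with rfl | rfl <;> rcases hb with rfl | rfl
    · exact absurd rfl hab
    · rw [gdist_antipode_self]
    · rw [gdist_comm, gdist_antipode_self]
    · exact absurd rfl hab
  · rw [Finset.sum_pair (antipode_ne x)]
    have h2 : ENNReal.ofReal (1/2 : ℝ) = (2⁻¹ : ℝ≥0∞) := by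
      rw [one_div, ENNReal.ofReal_inv_of_pos two_pos, ENNReal.ofReal_ofNat]
    rw [h2]; rfl

/-- For every `n ≥ 1`, the map `φ : RP^n → AVR^m(S^n; π)` given by
`φ([x]) = (1/2)δ_x + (1/2)δ_{-x}` is a topological embedding of `RP^n` into the
anti-Vietoris–Rips metric thickening `AVR^m(S^n; π)`. -/
theorem stmt5 (n : ℕ) (hn : 1 ≤ n) :
    ∃ h : ∀ q : RP n, phi n q ∈ avrmSet n Real.pi,
      Topology.IsEmbedding (fun q : RP n => (⟨phi n q, h q⟩ : AVRm n Real.pi)) := by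
  classical
  have hmem : ∀ q : RP n, phi n q ∈ avrmSet n Real.pi := by
    intro q
    induction q using Quot.ind with
    | _ x => exact phi0_mem x
  refine ⟨hmem, ?_⟩
  set F : RP n → AVRm n Real.pi := fun q => ⟨phi n q, hmem q⟩ with hF
  have hcont : Continuous F := by
    refine Continuous.subtype_mk ?_ _
    exact continuous_quot_lift _ continuous_phi0
  have hinj : Function.Injective F := by
    intro p q hpq
    have hphi : phi n p = phi n q := congrArg Subtype.val hpq
    induction p using Quot.ind with
    | _ x =>
    induction q using Quot.ind with
    | _ y =>
    have h0 : W1 (phi0 n x) (phi0 n y) = 0 := by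
      have hxy : phi0 n x = phi0 n y := hphi
      rw [hxy, W1_phi0_eq, rho_self, ENNReal.ofReal_zero]
    rw [W1_phi0_eq] at h0
    have hmin : min (gdist x y) (Real.pi - gdist x y) ≤ 0 := ENNReal.ofReal_eq_zero.mp h0
    rcases min_cases (gdist x y) (Real.pi - gdist x y) with ⟨he, -⟩ | ⟨he, -⟩
    · rw [he] at hmin
      have hxy : x = y := gdist_eq_zero (le_antisymm hmin (gdist_nonneg x y))
      rw [hxy]
    · rw [he] at hmin
      have hd : gdist x y = Real.pi := le_antisymm (gdist_le_pi x y) (by linarith)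
      exact Quot.sound (gdist_eq_pi hd)
  refine ⟨⟨?_⟩, hinj⟩
  refine le_antisymm (continuous_iff_le_induced.mp hcont) ?_
  rw [TopologicalSpace.le_def]
  intro U hU
  have hch : ∀ x : Sph n, ∃ ε : ℝ, 0 < ε ∧
      (Quot.mk (fun a b : Sph n => b = antipode a) x ∈ U → ∀ z : Sph n,
        min (gdist x z) (Real.pi - gdist x z) < ε →
          Quot.mk (fun a b : Sph n => b = antipode a) z ∈ U) := by
    intro x
    by_cases hx : Quot.mk (fun a b : Sph n => b = antipode a) x ∈ U
    · obtain ⟨ε, hε, hεp⟩ := exists_eps hU hx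
      exact ⟨ε, hε, fun _ => hεp⟩
    · exact ⟨1, one_pos, fun hx' => absurd hx' hx⟩
  choose ε hε1 hε2 using hch
  set W : Set (Measure (Sph n)) :=
    ⋃ (x : Sph n) (_ : Quot.mk (fun a b : Sph n => b = antipode a) x ∈ U),
      {ν | W1 (phi0 n x) ν < ENNReal.ofReal (ε x)} with hW
  have hWopen : IsOpen W := isOpen_iUnion fun x => isOpen_iUnion fun _ => isOpen_ball _ (hε1 x)
  have hVopen : IsOpen (Subtype.val ⁻¹' W : Set (AVRm n Real.pi)) :=
    hWopen.preimage continuous_subtype_val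
  have hpre : F ⁻¹' (Subtype.val ⁻¹' W) = U := by
    ext q
    obtain ⟨z, rfl⟩ := Quot.exists_rep q
    show F _ ∈ Subtype.val ⁻¹' W ↔ _
    constructor
    · intro hzW
      have hzW' : phi0 n z ∈ W := hzW
      rw [hW] at hzW'
      simp only [Set.mem_iUnion, Set.mem_setOf_eq] at hzW'
      obtain ⟨x, hxU, hx⟩ := hzW'
      rw [W1_phi0_eq] at hx
      exact hε2 x hxU z ((ENNReal.ofReal_lt_ofReal_iff (hε1 x)).mp hx)
    · intro hzU
      show phi0 n z ∈ W
      rw [hW]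
      simp only [Set.mem_iUnion, Set.mem_setOf_eq]
      refine ⟨z, hzU, ?_⟩
      rw [W1_phi0_eq, rho_self, ENNReal.ofReal_zero]
      exact ENNReal.ofReal_pos.mpr (hε1 z)
  exact ⟨Subtype.val ⁻¹' W, hVopen, hpre⟩

end
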